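/- If π ∈ S_n has pinnacle set P = {p_1 < p_2 < ⋯ < p_ℓ} and vale set V, then N_{PV}(p_i) ≥ 2 for every i ∈ [ℓ]. -/

import Mathlib

/-- The extended one-line word of `w`, read 1-indexed, with the boundary
convention `π₀ = π_{n+1} = ∞`. -/
def ext (w : List ℕ) (i : ℕ) : ℕ∞ :=
  if 1 ≤ i ∧ i ≤ w.length then (w.getD (i - 1) 0 : ℕ∞) else ⊤

/-- The pinnacle set of the word `w`: values `π_i` with `π_{i-1} < π_i > π_{i+1}`. -/
def pinnSet (w : List ℕ) : Finset ℕ :=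
  ((Finset.Icc 1 w.length).filter fun i =>
      ext w (i - 1) < ext w i ∧ ext w (i + 1) < ext w i).image fun i => w.getD (i - 1) 0

/-- The vale set of the word `w`: values `π_i` with `π_{i-1} > π_i < π_{i+1}`. -/
def valeSet (w : List ℕ) : Finset ℕ :=
  ((Finset.Icc 1 w.length).filter fun i =>
      ext w i < ext w (i - 1) ∧ ext w i < ext w (i + 1)).image fun i => w.getD (i - 1) 0

/-- `w` is the one-line notation of a permutation of `[n] = {1, …, n}`. -/
def IsPermOf (n : ℕ) (w : List ℕ) : Prop := w.Perm (List.range' 1 n)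

/-- `w₁` in the `x`-factorization `w = w₁ w₂ x w₄ w₅`. -/
def fsW1 (x : ℕ) (w : List ℕ) : List ℕ :=
  ((w.take (w.idxOf x)).reverse.dropWhile fun a => decide (a < x)).reverse

/-- `w₂` in the `x`-factorization: the longest contiguous subword immediately to the
left of `x` all of whose letters are smaller than `x`. -/
def fsW2 (x : ℕ) (w : List ℕ) : List ℕ :=
  ((w.take (w.idxOf x)).reverse.takeWhile fun a => decide (a < x)).reverse

/-- `w₄` in the `x`-factorization: the longest contiguous subword immediately to the
right of `x` all of whose letters are smaller than `x`. -/
def fsW4 (x : ℕ) (w : List ℕ) : List ℕ :=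
  (w.drop (w.idxOf x + 1)).takeWhile fun a => decide (a < x)

/-- `w₅` in the `x`-factorization `w = w₁ w₂ x w₄ w₅`. -/
def fsW5 (x : ℕ) (w : List ℕ) : List ℕ :=
  (w.drop (w.idxOf x + 1)).dropWhile fun a => decide (a < x)

/-- The dual Foata–Strehl map `φ_x : w₁ w₂ x w₄ w₅ ↦ w₁ w₄ x w₂ w₅`. -/
def dualFS (x : ℕ) (w : List ℕ) : List ℕ :=
  if x ∈ w then fsW1 x w ++ fsW4 x w ++ [x] ++ fsW2 x w ++ fsW5 x w else w

/-- The dual Foata–Strehl map `φ_S` for a set `S`, i.e. the composition of the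
(commuting) maps `φ_x` over `x ∈ S`. -/
noncomputable def dualFSFinset (S : Finset ℕ) (w : List ℕ) : List ℕ :=
  S.toList.foldr dualFS w

/-- The largest letter of a word, with `wmax [] = 0`. -/
def wmax (w : List ℕ) : ℕ := w.foldr max 0

/-- The subword of `w` consisting of the letters lying in `A`. -/
def restrictTo (w : List ℕ) (A : Finset ℕ) : List ℕ :=
  w.filter fun a => decide (a ∈ A)

/-- `N_{PV}(k) = |V_k| - |P_k|` (natural subtraction). -/
def nPV (P V : Finset ℕ) (k : ℕ) : ℕ :=
  (V.filter fun v => v < k).card - (P.filter fun p => p < k).card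

/-- `N_{PV}(k) = |V_k| - |P_k|` as an integer. -/
def nPVZ (P V : Finset ℕ) (k : ℕ) : ℤ :=
  ((V.filter fun v => v < k).card : ℤ) - ((P.filter fun p => p < k).card : ℤ)

/-- `(P, V)` is admissible: some permutation of `[n]` has pinnacle set `P` and
vale set `V`. -/
def AdmissiblePair (n : ℕ) (P V : Finset ℕ) : Prop :=
  ∃ w : List ℕ, IsPermOf n w ∧ pinnSet w = P ∧ valeSet w = V

open Classical in
/-- `𝒱(P)`: the collection of all vale sets `V` for which `(P, V)` is admissible. -/
noncomputable def valeSetsOf (n : ℕ) (P : Finset ℕ) : Finset (Finset ℕ) :=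
  ((Finset.Icc 1 n).powerset).filter fun V => AdmissiblePair n P V

/-- `w` is FS-minimal: it has no double descents (with the `∞` boundary convention),
and for each pinnacle `p`, the `p`-factorization of the restriction of `w` to its
pinnacles and vales satisfies `max w₂ < max w₄`. -/
def FSMinimal (w : List ℕ) : Prop :=
  (∀ i ∈ Finset.Icc 1 w.length,
      ¬(ext w i < ext w (i - 1) ∧ ext w (i + 1) < ext w i)) ∧
  ∀ p ∈ pinnSet w,
    wmax (fsW2 p (restrictTo w (pinnSet w ∪ valeSet w))) <
      wmax (fsW4 p (restrictTo w (pinnSet w ∪ valeSet w)))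

/-- A `PV`-arrangement: a word listing each element of `P ∪ V` exactly once,
with pinnacle set `P` and vale set `V`. -/
def IsPVArrangement (P V : Finset ℕ) (α : List ℕ) : Prop :=
  α.Nodup ∧ α.toFinset = P ∪ V ∧ pinnSet α = P ∧ valeSet α = V

/-- A word is canonical (for pinnacle set `P`) if for each `p ∈ P` its
`p`-factorization satisfies `max w₂ < max w₄`. -/
def IsCanonical (P : Finset ℕ) (α : List ℕ) : Prop :=
  ∀ p ∈ P, wmax (fsW2 p α) < wmax (fsW4 p α)

/-- The number of descents of `w`: indices `j ∈ [n-1]` with `π_j > π_{j+1}`. -/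
def descentCount (w : List ℕ) : ℕ :=
  ((Finset.Icc 1 (w.length - 1)).filter fun j => w.getD j 0 < w.getD (j - 1) 0).card

/-- The original Foata–Strehl map `φ'_x`, defined like `φ_x` but with the words
`w₂, w₄` consisting of letters GREATER than `x`. -/
def origFS (x : ℕ) (w : List ℕ) : List ℕ :=
  if x ∈ w then
    ((w.take (w.idxOf x)).reverse.dropWhile fun a => decide (x < a)).reverse
      ++ ((w.drop (w.idxOf x + 1)).takeWhile fun a => decide (x < a)) ++ [x]
      ++ ((w.take (w.idxOf x)).reverse.takeWhile fun a => decide (x < a)).reverse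
      ++ ((w.drop (w.idxOf x + 1)).dropWhile fun a => decide (x < a))
  else w

/-- `C(l)`: weak compositions `(t₁, …, t_l)` of `l` with `t₁ + ⋯ + t_k ≥ k` for all `k`. -/
def weakComps (l : ℕ) : Finset (Fin l → ℕ) :=
  (Fintype.piFinset fun _ : Fin l => Finset.range (l + 1)).filter fun t =>
    (∑ i, t i) = l ∧ ∀ k : Fin l, (k : ℕ) + 1 ≤ ∑ i ∈ Finset.univ.filter (fun j => j ≤ k), t i

/-- `g_{i+1} = |G_{i+1}|`, the size of the `(i+1)`-st gap set
`G_{i+1} = {j ∈ [n] \ P : p_i < j < p_{i+1}}` (0-indexed `i`, with `p₀ = 1`). -/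
def gapCard (n : ℕ) (P : Finset ℕ) (i : ℕ) : ℕ :=
  (((Finset.Icc 1 n) \ P).filter fun j =>
      (if i = 0 then 1 else (P.sort (· ≤ ·)).getD (i - 1) 0) < j ∧
        j < (P.sort (· ≤ ·)).getD i 0).card

section Aux
variable (w : List ℕ)

lemma ext_eq_of_mem {i : ℕ} (h1 : 1 ≤ i) (h2 : i ≤ w.length) :
    ext w i = (w.getD (i - 1) 0 : ℕ∞) := by simp [ext, h1, h2]

lemma ext_top {i : ℕ} (h : ¬(1 ≤ i ∧ i ≤ w.length)) : ext w i = ⊤ := by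
  simp only [ext, if_neg h]

lemma ext_lt_top {i : ℕ} (h1 : 1 ≤ i) (h2 : i ≤ w.length) : ext w i < ⊤ := by
  rw [ext_eq_of_mem w h1 h2]
  exact_mod_cast lt_top_iff_ne_top.mpr (by simp)

lemma getD_inj (hnd : w.Nodup) {i j : ℕ} (hi1 : 1 ≤ i) (hiL : i ≤ w.length)
    (hj1 : 1 ≤ j) (hjL : j ≤ w.length)
    (h : w.getD (i - 1) 0 = w.getD (j - 1) 0) : i = j := by
  have hi' : i - 1 < w.length := by omega
  have hj' : j - 1 < w.length := by omega
  rw [List.getD_eq_getElem w 0 hi', List.getD_eq_getElem w 0 hj'] at h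
  have := (List.Nodup.getElem_inj_iff hnd).1 h
  omega

lemma ext_ne (hnd : w.Nodup) {i j : ℕ} (hi1 : 1 ≤ i) (hiL : i ≤ w.length)
    (hj1 : 1 ≤ j) (hjL : j ≤ w.length) (hij : i ≠ j) : ext w i ≠ ext w j := by
  rw [ext_eq_of_mem w hi1 hiL, ext_eq_of_mem w hj1 hjL]
  intro h
  have h' : w.getD (i - 1) 0 = w.getD (j - 1) 0 := by exact_mod_cast h
  exact hij (getD_inj w hnd hi1 hiL hj1 hjL h')

lemma ext_lt_rev (hnd : w.Nodup) {i j : ℕ} (hi1 : 1 ≤ i) (hiL : i ≤ w.length)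
    (hj1 : 1 ≤ j) (hjL : j ≤ w.length) (hij : i ≠ j) (h : ¬ ext w i < ext w j) :
    ext w j < ext w i :=
  lt_of_le_of_ne (not_lt.1 h) (ext_ne w hnd hj1 hjL hi1 hiL (Ne.symm hij))

lemma chain_desc : ∀ {i j : ℕ}, (∀ k, i ≤ k → k < j → ext w (k + 1) < ext w k) →
    i < j → ext w j < ext w i := by
  intro i j
  induction j with
  | zero => intro _ h; omega
  | succ j ih =>
    intro h hij
    rcases Nat.lt_or_ge i j with h' | h'
    · exact lt_trans (h j (by omega) (by omega)) (ih (fun k hk1 hk2 => h k hk1 (by omega)) h')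
    · have hij' : i = j := by omega
      subst hij'
      exact h i (le_refl _) (by omega)

lemma chain_asc : ∀ {i j : ℕ}, (∀ k, i ≤ k → k < j → ext w k < ext w (k + 1)) →
    i < j → ext w i < ext w j := by
  intro i j
  induction j with
  | zero => intro _ h; omega
  | succ j ih =>
    intro h hij
    rcases Nat.lt_or_ge i j with h' | h'
    · exact lt_trans (ih (fun k hk1 hk2 => h k hk1 (by omega)) h') (h j (by omega) (by omega))
    · have hij' : i = j := by omega
      subst hij'
      exact h i (le_refl _) (by omega)

/-- first ascent position `≥ i` -/
noncomputable def nfp (i : ℕ) : ℕ := sInf {j | i ≤ j ∧ ext w j < ext w (j + 1)}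

/-- start of the maximal ascending run ending at `i` -/
noncomputable def nbp (i : ℕ) : ℕ := i - sInf {m | ext w (i - m) < ext w (i - m - 1)}

lemma nfp_no_asc {i k : ℕ} (hik : i ≤ k) (hk : k < nfp w i) : ¬ ext w k < ext w (k + 1) := by
  have := Nat.notMem_of_lt_sInf hk
  simp only [Set.mem_setOf_eq, not_and] at this
  exact this hik

lemma nfp_spec (hnd : w.Nodup) {i : ℕ} (hi1 : 1 ≤ i) (hiL : i ≤ w.length)
    (hdesc : ext w (i + 1) < ext w i) :
    i < nfp w i ∧ nfp w i ≤ w.length ∧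
      (ext w (nfp w i) < ext w (nfp w i - 1) ∧ ext w (nfp w i) < ext w (nfp w i + 1)) ∧
      ext w (nfp w i) < ext w i := by
  have htop : ext w (w.length + 1) = ⊤ := ext_top w (by omega)
  have hLmem : w.length ∈ {j | i ≤ j ∧ ext w j < ext w (j + 1)} := by
    refine ⟨hiL, ?_⟩
    rw [htop]
    exact ext_lt_top w (by omega) (le_refl _)
  have hne : {j | i ≤ j ∧ ext w j < ext w (j + 1)}.Nonempty := ⟨_, hLmem⟩
  have hmem : i ≤ nfp w i ∧ ext w (nfp w i) < ext w (nfp w i + 1) := Nat.sInf_mem hne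
  obtain ⟨hile, hasc⟩ := hmem
  have hle : nfp w i ≤ w.length := Nat.sInf_le hLmem
  have hlt : i < nfp w i := by
    rcases Nat.lt_or_ge i (nfp w i) with h | h
    · exact h
    · exfalso
      have heq : nfp w i = i := by omega
      rw [heq] at hasc
      exact lt_asymm hasc hdesc
  have hdescs : ∀ k, i ≤ k → k < nfp w i → ext w (k + 1) < ext w k := by
    intro k hk1 hk2
    exact ext_lt_rev w hnd (by omega) (by omega) (by omega) (by omega) (by omega)
      (nfp_no_asc w hk1 hk2)
  refine ⟨hlt, hle, ⟨?_, hasc⟩, chain_desc w hdescs hlt⟩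
  have := hdescs (nfp w i - 1) (by omega) (by omega)
  have heq : nfp w i - 1 + 1 = nfp w i := by omega
  rwa [heq] at this

lemma nfp_lt_of_asc {i i' : ℕ} (hii' : i < i') (hi'1 : 1 ≤ i')
    (hasc' : ext w (i' - 1) < ext w i') : nfp w i < i' := by
  by_contra h
  have hk := nfp_no_asc w (i := i) (k := i' - 1) (by omega) (by omega)
  have heq : i' - 1 + 1 = i' := by omega
  rw [heq] at hk
  exact hk hasc'

lemma nbp_memT {i : ℕ} (hi1 : 1 ≤ i) (hiL : i ≤ w.length) :
    (i - 1) ∈ {m | ext w (i - m) < ext w (i - m - 1)} := by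
  simp only [Set.mem_setOf_eq]
  have h0 : i - (i - 1) - 1 = 0 := by omega
  have h1 : i - (i - 1) = 1 := by omega
  rw [h0, h1]
  rw [ext_top w (i := 0) (by omega)]
  exact ext_lt_top w (by omega) (by omega)

lemma nbp_asc (hnd : w.Nodup) {i k : ℕ} (hi1 : 1 ≤ i) (hiL : i ≤ w.length)
    (hk1 : nbp w i ≤ k) (hk2 : k < i) : ext w k < ext w (k + 1) := by
  have hm0le : sInf {m | ext w (i - m) < ext w (i - m - 1)} ≤ i - 1 :=
    Nat.sInf_le (nbp_memT w hi1 hiL)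
  have hnbp : nbp w i = i - sInf {m | ext w (i - m) < ext w (i - m - 1)} := rfl
  have hm : i - 1 - k < sInf {m | ext w (i - m) < ext w (i - m - 1)} := by omega
  have hnot := Nat.notMem_of_lt_sInf hm
  simp only [Set.mem_setOf_eq] at hnot
  have e2 : i - (i - 1 - k) - 1 = k := by omega
  have e1 : i - (i - 1 - k) = k + 1 := by omega
  rw [e2, e1] at hnot
  exact ext_lt_rev w hnd (by omega) (by omega) (by omega) (by omega) (by omega) hnot

lemma nbp_spec (hnd : w.Nodup) {i : ℕ} (hi1 : 1 ≤ i) (hiL : i ≤ w.length)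
    (hasc : ext w (i - 1) < ext w i) :
    1 ≤ nbp w i ∧ nbp w i < i ∧
      (ext w (nbp w i) < ext w (nbp w i - 1) ∧ ext w (nbp w i) < ext w (nbp w i + 1)) ∧
      ext w (nbp w i) < ext w i := by
  have hm0le : sInf {m | ext w (i - m) < ext w (i - m - 1)} ≤ i - 1 :=
    Nat.sInf_le (nbp_memT w hi1 hiL)
  have hmem : ext w (i - sInf {m | ext w (i - m) < ext w (i - m - 1)})
      < ext w (i - sInf {m | ext w (i - m) < ext w (i - m - 1)} - 1) :=
    Nat.sInf_mem (⟨_, nbp_memT w hi1 hiL⟩ :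
      {m | ext w (i - m) < ext w (i - m - 1)}.Nonempty)
  have hnbp : nbp w i = i - sInf {m | ext w (i - m) < ext w (i - m - 1)} := rfl
  have hm0ne : sInf {m | ext w (i - m) < ext w (i - m - 1)} ≠ 0 := by
    intro h
    rw [h] at hmem
    simp only [Nat.sub_zero] at hmem
    exact lt_asymm hmem hasc
  have h1 : 1 ≤ nbp w i := by omega
  have h2 : nbp w i < i := by omega
  have hdesc : ext w (nbp w i) < ext w (nbp w i - 1) := by rw [hnbp]; exact hmem
  have hascs : ∀ k, nbp w i ≤ k → k < i → ext w k < ext w (k + 1) :=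
    fun k hk1 hk2 => nbp_asc w hnd hi1 hiL hk1 hk2
  exact ⟨h1, h2, ⟨hdesc, hascs _ (le_refl _) h2⟩, chain_asc w hascs h2⟩

lemma lt_nbp_of_desc (hnd : w.Nodup) {i i' : ℕ} (hi'1 : 1 ≤ i') (hi'L : i' ≤ w.length)
    (hii' : i < i') (hdesc : ext w (i + 1) < ext w i) : i < nbp w i' := by
  by_contra h
  have := nbp_asc w hnd hi'1 hi'L (i := i') (k := i) (by omega) hii'
  exact lt_asymm this hdesc

lemma value_lt {j p : ℕ} (hj1 : 1 ≤ j) (hjL : j ≤ w.length) (h : ext w j < (p : ℕ∞)) :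
    w.getD (j - 1) 0 < p := by
  rw [ext_eq_of_mem w hj1 hjL] at h
  exact_mod_cast h

lemma card_filter_image (hnd : w.Nodup) (S : Finset ℕ) (hS : S ⊆ Finset.Icc 1 w.length)
    (q : ℕ → Prop) [DecidablePred q] :
    ((S.image (fun i => w.getD (i - 1) 0)).filter q).card
      = (S.filter (fun i => q (w.getD (i - 1) 0))).card := by
  rw [Finset.filter_image]
  refine Finset.card_image_of_injOn ?_
  intro i hi j hj hij
  simp only [Finset.coe_filter, Set.mem_setOf_eq] at hi hj
  have hi' := Finset.mem_Icc.1 (hS hi.1)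
  have hj' := Finset.mem_Icc.1 (hS hj.1)
  exact getD_inj w hnd hi'.1 hi'.2 hj'.1 hj'.2 hij

end Aux

/-- Lemma 4.2(c): if `π ∈ S_n` has pinnacle set `P` and vale set
`V`, then `N_PV(p) ≥ 2` for every pinnacle `p`. -/
theorem two_le_nPV (n : ℕ) (π : List ℕ) (hπ : IsPermOf n π) (P V : Finset ℕ)
    (hP : pinnSet π = P) (hV : valeSet π = V) :
    ∀ p ∈ P, 2 ≤ nPVZ P V p := by
  subst hP; subst hV
  intro p hp
  have hnd : π.Nodup := hπ.nodup_iff.mpr (by simp [List.nodup_range'])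
  rw [pinnSet, Finset.mem_image] at hp
  obtain ⟨ip, hipmem, hipval⟩ := hp
  rw [Finset.mem_filter, Finset.mem_Icc] at hipmem
  obtain ⟨⟨hip1, hipL⟩, hipasc, hipdesc⟩ := hipmem
  have hextip : ext π ip = (p : ℕ∞) := by
    rw [ext_eq_of_mem π hip1 hipL, hipval]
  set PS := (Finset.Icc 1 π.length).filter
      (fun i => (ext π (i - 1) < ext π i ∧ ext π (i + 1) < ext π i) ∧
        π.getD (i - 1) 0 < p) with hPS
  set VS := (Finset.Icc 1 π.length).filter
      (fun i => (ext π i < ext π (i - 1) ∧ ext π i < ext π (i + 1)) ∧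
        π.getD (i - 1) 0 < p) with hVS
  have hPSmem : ∀ i ∈ PS, (1 ≤ i ∧ i ≤ π.length) ∧
      (ext π (i - 1) < ext π i ∧ ext π (i + 1) < ext π i) ∧ π.getD (i - 1) 0 < p := by
    intro i hi
    rw [hPS, Finset.mem_filter, Finset.mem_Icc] at hi
    exact hi
  set a := nbp π ip with ha
  set b := nfp π ip with hb
  have haspec := nbp_spec π hnd hip1 hipL hipasc
  have hbspec := nfp_spec π hnd hip1 hipL hipdesc
  have haVS : a ∈ VS := by
    rw [hVS, Finset.mem_filter, Finset.mem_Icc]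
    refine ⟨⟨haspec.1, by omega⟩, haspec.2.2.1, ?_⟩
    exact value_lt π haspec.1 (by omega) (hextip ▸ haspec.2.2.2)
  have hbVS : b ∈ VS := by
    rw [hVS, Finset.mem_filter, Finset.mem_Icc]
    refine ⟨⟨by omega, hbspec.2.1⟩, hbspec.2.2.1, ?_⟩
    exact value_lt π (by omega) hbspec.2.1 (hextip ▸ hbspec.2.2.2)
  have hab : a ≠ b := by
    have h1 := haspec.2.1
    have h2 := hbspec.1
    omega
  classical
  set F : ℕ → ℕ := fun i => if i < ip then nbp π i else nfp π i with hF
  have hne_ip : ∀ i ∈ PS, i ≠ ip := by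
    intro i hi h
    have := (hPSmem i hi).2.2
    rw [h, hipval] at this
    exact absurd this (lt_irrefl p)
  have hmaps : ∀ i ∈ PS, F i ∈ VS \ {a, b} := by
    intro i hi
    obtain ⟨⟨hi1, hiL⟩, ⟨hiasc, hidesc⟩, hival⟩ := hPSmem i hi
    have hine : i ≠ ip := hne_ip i hi
    have hvallt : ext π i < (p : ℕ∞) := by
      rw [ext_eq_of_mem π hi1 hiL]
      exact_mod_cast hival
    rw [Finset.mem_sdiff]
    rcases Nat.lt_or_ge i ip with hiip | hiip
    · have hFi : F i = nbp π i := if_pos hiip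
      have hs := nbp_spec π hnd hi1 hiL hiasc
      have hia : i < a := lt_nbp_of_desc π hnd hip1 hipL hiip hidesc
      constructor
      · rw [hFi, hVS, Finset.mem_filter, Finset.mem_Icc]
        refine ⟨⟨hs.1, by omega⟩, hs.2.2.1, ?_⟩
        exact value_lt π hs.1 (by omega) (lt_trans hs.2.2.2 hvallt)
      · simp only [Finset.mem_insert, Finset.mem_singleton]
        push_neg
        have h1 := hs.2.1
        have h2 := hbspec.1
        rw [hFi]
        constructor <;> omega
    · have hiip' : ip < i := by omega
      have hFi : F i = nfp π i := if_neg (by omega)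
      have hs := nfp_spec π hnd hi1 hiL hidesc
      have hsep : b < i := nfp_lt_of_asc π hiip' hi1 hiasc
      constructor
      · rw [hFi, hVS, Finset.mem_filter, Finset.mem_Icc]
        refine ⟨⟨by omega, hs.2.1⟩, hs.2.2.1, ?_⟩
        exact value_lt π (by omega) hs.2.1 (lt_trans hs.2.2.2 hvallt)
      · simp only [Finset.mem_insert, Finset.mem_singleton]
        push_neg
        have h1 := hs.1
        have h2 := haspec.2.1
        rw [hFi]
        constructor <;> omega
  have hmono : ∀ i ∈ PS, ∀ j ∈ PS, i < j → F i < F j := by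
    intro i hi j hj hij
    obtain ⟨⟨hi1, hiL⟩, ⟨hiasc, hidesc⟩, hival⟩ := hPSmem i hi
    obtain ⟨⟨hj1, hjL⟩, ⟨hjasc, hjdesc⟩, hjval⟩ := hPSmem j hj
    have hine : i ≠ ip := hne_ip i hi
    have hjne : j ≠ ip := hne_ip j hj
    rcases Nat.lt_or_ge i ip with hiip | hiip
    · have hFi : F i = nbp π i := if_pos hiip
      have hsi := nbp_spec π hnd hi1 hiL hiasc
      rcases Nat.lt_or_ge j ip with hjip | hjip
      · have hFj : F j = nbp π j := if_pos hjip
        have hsep : i < nbp π j := lt_nbp_of_desc π hnd hj1 hjL hij hidesc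
        have h1 := hsi.2.1
        rw [hFi, hFj]
        omega
      · have hjip' : ip < j := by omega
        have hFj : F j = nfp π j := if_neg (by omega)
        have hsj := nfp_spec π hnd hj1 hjL hjdesc
        have h1 := hsi.2.1
        have h2 := hsj.1
        rw [hFi, hFj]
        omega
    · have hiip' : ip < i := by omega
      have hFi : F i = nfp π i := if_neg (by omega)
      have hFj : F j = nfp π j := if_neg (by omega)
      have hsep : nfp π i < j := nfp_lt_of_asc π hij hj1 hjasc
      have h2 := (nfp_spec π hnd hj1 hjL hjdesc).1
      rw [hFi, hFj]
      omega
  have hinj : Set.InjOn F PS := by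
    intro i hi j hj h
    rcases lt_trichotomy i j with h' | h' | h'
    · exact absurd h (ne_of_lt (hmono i (Finset.mem_coe.1 hi) j (Finset.mem_coe.1 hj) h'))
    · exact h'
    · exact absurd h.symm (ne_of_lt (hmono j (Finset.mem_coe.1 hj) i (Finset.mem_coe.1 hi) h'))
  have hcardle : PS.card ≤ (VS \ {a, b}).card :=
    Finset.card_le_card_of_injOn F hmaps hinj
  have habsub : ({a, b} : Finset ℕ) ⊆ VS := by
    intro x hx
    rcases Finset.mem_insert.1 hx with h | h
    · rwa [h]
    · rw [Finset.mem_singleton.1 h]; exact hbVS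
  have hcard2 : (VS \ {a, b}).card = VS.card - 2 := by
    rw [Finset.card_sdiff_of_subset habsub, Finset.card_pair hab]
  have hge2 : 2 ≤ VS.card := by
    have := Finset.card_le_card habsub
    rwa [Finset.card_pair hab] at this
  have hmain : PS.card + 2 ≤ VS.card := by omega
  have hPcard : ((pinnSet π).filter (fun v => v < p)).card = PS.card := by
    rw [pinnSet, card_filter_image π hnd _ (Finset.filter_subset _ _) (fun v => v < p),
      Finset.filter_filter]
  have hVcard : ((valeSet π).filter (fun v => v < p)).card = VS.card := by
    rw [valeSet, card_filter_image π hnd _ (Finset.filter_subset _ _) (fun v => v < p),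
      Finset.filter_filter]
  rw [nPVZ, hPcard, hVcard]

  omega
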